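/- Let Σ be a finite abstract simplicial complex of dimension n ≥ 1 on a linearly ordered vertex set such that every (n−1)-simplex is a facet of at least one n-simplex, and such that the graph on Σ_{n−1} in which two distinct (n−1)-simplices are adjacent iff they are facets of a common n-simplex is connected. Then Σ is disorientable if and only if the normalized up-Laplacian Δ_{n−1}^up attains the maximal possible eigenvalue n+1, i.e., n+1 lies in the spectrum of Δ_{n−1}^up. -/

import Mathlib

open scoped BigOperators

/-- A finite abstract simplicial complex: a collection of nonempty finite vertex sets closed
under taking nonempty subsets. -/
def IsSimplicialComplex {U : Type*} [LinearOrder U] (K : Finset (Finset U)) : Prop :=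
  (∀ σ ∈ K, σ.Nonempty) ∧ ∀ τ ∈ K, ∀ σ ⊆ τ, σ.Nonempty → σ ∈ K

/-- The set `Σ_k` of `k`-simplices (sets of `k+1` vertices) of `K`. -/
def faces {U : Type*} [LinearOrder U] (K : Finset (Finset U)) (k : ℕ) : Finset (Finset U) :=
  K.filter fun σ => σ.card = k + 1

/-- The degree of a simplex `σ`: the number of cofacets of `σ` in `K`. -/
def degS {U : Type*} [LinearOrder U] (K : Finset (Finset U)) (σ : Finset U) : ℕ :=
  (K.filter fun τ => σ ⊆ τ ∧ τ.card = σ.card + 1).card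

/-- The incidence sign `sgn([σ], ∂[τ]) = (−1)^i` when the vertex of `τ` missing from `σ` is the
`(i+1)`-st smallest vertex of `τ` (and `0` if `τ ∖ σ` is not a singleton). -/
def sgnZ {U : Type*} [LinearOrder U] (σ τ : Finset U) : ℤ :=
  ∑ v ∈ τ \ σ, (-1 : ℤ) ^ (τ.filter fun x => x < v).card

/-- The matrix of the normalized up-Laplacian `Δ_k^up` acting on `k`-cochains:
`(Δ_k^up f)(σ) = f(σ) + (1/deg σ) Σ_{σ'≠σ, common cofacet τ} sgn([σ],∂[τ]) sgn([σ'],∂[τ]) f(σ')`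
(each pair of distinct `k`-simplices has at most one common cofacet `τ ∈ Σ_{k+1}`). -/
noncomputable def upLapMatrix {U : Type*} [LinearOrder U] (K : Finset (Finset U)) (k : ℕ) :
    Matrix {σ // σ ∈ faces K k} {σ // σ ∈ faces K k} ℝ :=
  fun σ σ' =>
    if σ = σ' then 1
    else (degS K σ.1 : ℝ)⁻¹ *
      ∑ τ ∈ K.filter (fun τ => τ.card = k + 2 ∧ σ.1 ⊆ τ ∧ σ'.1 ⊆ τ),
        (sgnZ σ.1 τ : ℝ) * (sgnZ σ'.1 τ : ℝ)

/-- A pure `n`-dimensional simplicial complex is disorientable if the `n`-simplices can be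
oriented (`ε : Σ_n → {±1}`) so that whenever an `(n−1)`-simplex `ρ` is a facet of two
`n`-simplices `τ, τ'`, the induced orientations on `ρ` agree:
`ε(τ)·sgn([ρ],∂[τ]) = ε(τ')·sgn([ρ],∂[τ'])`. -/
def Disorientable {U : Type*} [LinearOrder U] (K : Finset (Finset U)) (n : ℕ) : Prop :=
  ∃ ε : Finset U → ℝ, (∀ τ ∈ faces K n, ε τ = 1 ∨ ε τ = -1) ∧
    ∀ ρ ∈ faces K (n - 1), ∀ τ ∈ faces K n, ∀ τ' ∈ faces K n,
      ρ ⊆ τ → ρ ⊆ τ' → ε τ * (sgnZ ρ τ : ℝ) = ε τ' * (sgnZ ρ τ' : ℝ)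

section aux
open Finset
variable {U : Type*} [LinearOrder U]

variable {U : Type*} [LinearOrder U]

lemma sgnZ_exists_pow (σ τ : Finset U) (hsub : σ ⊆ τ) (hc : τ.card = σ.card + 1) :
    ∃ k, sgnZ σ τ = (-1) ^ k := by
  have h : (τ \ σ).card = 1 := by rw [Finset.card_sdiff_of_subset hsub]; omega
  obtain ⟨v, hv⟩ := Finset.card_eq_one.mp h
  exact ⟨_, by rw [sgnZ, hv, Finset.sum_singleton]⟩

lemma sgnZ_mul_self (σ τ : Finset U) (hsub : σ ⊆ τ) (hc : τ.card = σ.card + 1) :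
    (sgnZ σ τ : ℝ) * (sgnZ σ τ : ℝ) = 1 := by
  obtain ⟨k, hk⟩ := sgnZ_exists_pow σ τ hsub hc
  rw [hk]; push_cast
  rw [← pow_add]
  exact Even.neg_one_pow ⟨k, rfl⟩

lemma mem_faces_iff (K : Finset (Finset U)) (k : ℕ) (σ : Finset U) :
    σ ∈ faces K k ↔ σ ∈ K ∧ σ.card = k + 1 := Finset.mem_filter

lemma erase_mem_faces (K : Finset (Finset U)) (hK : IsSimplicialComplex K) (m : ℕ)
    (τ : Finset U) (hτ : τ ∈ faces K (m + 1)) (v : U) (hv : v ∈ τ) :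
    τ.erase v ∈ faces K m := by
  rw [mem_faces_iff] at hτ ⊢
  have hcard : (τ.erase v).card = m + 1 := by
    rw [Finset.card_erase_of_mem hv, hτ.2]
    omega
  refine ⟨hK.2 τ hτ.1 _ (Finset.erase_subset _ _) ?_, hcard⟩
  rw [← Finset.card_pos, hcard]; omega

lemma facets_eq (K : Finset (Finset U)) (hK : IsSimplicialComplex K) (m : ℕ)
    (τ : Finset U) (hτ : τ ∈ faces K (m + 1)) :
    (faces K m).filter (· ⊆ τ) = τ.image (fun v => τ.erase v) := by
  have hτc : τ.card = m + 2 := (mem_faces_iff K _ τ).mp hτ |>.2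
  ext σ
  simp only [Finset.mem_filter, Finset.mem_image]
  constructor
  · rintro ⟨hσ, hsub⟩
    have hσc : σ.card = m + 1 := (mem_faces_iff K _ σ).mp hσ |>.2
    have h1 : (τ \ σ).card = 1 := by rw [Finset.card_sdiff_of_subset hsub]; omega
    obtain ⟨v, hv⟩ := Finset.card_eq_one.mp h1
    have hvτ : v ∈ τ := (Finset.mem_sdiff.mp (hv ▸ Finset.mem_singleton_self v)).1
    have hvσ : v ∉ σ := (Finset.mem_sdiff.mp (hv ▸ Finset.mem_singleton_self v)).2
    refine ⟨v, hvτ, ?_⟩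
    have hsub2 : σ ⊆ τ.erase v := fun x hx =>
      Finset.mem_erase.mpr ⟨fun h => hvσ (h ▸ hx), hsub hx⟩
    exact (Finset.eq_of_subset_of_card_le hsub2
      (by rw [Finset.card_erase_of_mem hvτ, hτc, hσc]; omega)).symm
  · rintro ⟨v, hv, rfl⟩
    exact ⟨erase_mem_faces K hK m τ hτ v hv, Finset.erase_subset _ _⟩

lemma card_facets (K : Finset (Finset U)) (hK : IsSimplicialComplex K) (m : ℕ)
    (τ : Finset U) (hτ : τ ∈ faces K (m + 1)) :
    ((faces K m).filter (· ⊆ τ)).card = m + 2 := by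
  rw [facets_eq K hK m τ hτ, Finset.card_image_of_injOn, (mem_faces_iff K _ τ).mp hτ |>.2]
  intro v hv w hw h
  simp only at h
  by_contra hne
  have : v ∈ τ.erase w := Finset.mem_erase.mpr ⟨hne, hv⟩
  rw [← h] at this
  exact (Finset.mem_erase.mp this).1 rfl

lemma degS_eq (K : Finset (Finset U)) (m : ℕ) (σ : Finset U) (hσ : σ.card = m + 1) :
    degS K σ = ((faces K (m + 1)).filter (σ ⊆ ·)).card := by
  unfold degS faces
  rw [Finset.filter_filter]
  congr 1
  apply Finset.filter_congr
  intro τ _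
  rw [hσ]
  simp [and_comm]

lemma card_attach_filter (s : Finset (Finset U)) (p : Finset U → Prop) [DecidablePred p] :
    (s.attach.filter (fun x => p x.1)).card = (s.filter p).card := by
  rw [Finset.filter_attach, Finset.card_map, Finset.card_attach]

lemma cof_filter (K : Finset (Finset U)) (m : ℕ) (σ σ' : Finset U) :
    K.filter (fun τ => τ.card = m + 2 ∧ σ ⊆ τ ∧ σ' ⊆ τ)
      = (faces K (m+1)).filter (fun τ => σ ⊆ τ ∧ σ' ⊆ τ) := by
  unfold faces
  rw [Finset.filter_filter]

lemma degS_pos (K : Finset (Finset U)) (m : ℕ) (σ : Finset U) (hσ : σ ∈ faces K m)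
    (hcof : ∀ σ ∈ faces K m, ∃ τ ∈ faces K (m+1), σ ⊆ τ) : 0 < degS K σ := by
  obtain ⟨τ, hτ, hsub⟩ := hcof σ hσ
  rw [degS_eq K m σ ((mem_faces_iff K m σ).mp hσ).2]
  exact Finset.card_pos.mpr ⟨τ, Finset.mem_filter.mpr ⟨hτ, hsub⟩⟩

lemma sgnZ_sq_of_face (K : Finset (Finset U)) (m : ℕ) (σ τ : Finset U)
    (hσ : σ ∈ faces K m) (hτ : τ ∈ faces K (m+1)) (hsub : σ ⊆ τ) :
    (sgnZ σ τ : ℝ) * (sgnZ σ τ : ℝ) = 1 :=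
  sgnZ_mul_self σ τ hsub (by
    rw [((mem_faces_iff K m σ).mp hσ).2, ((mem_faces_iff K (m+1) τ).mp hτ).2])

lemma forward_dir (K : Finset (Finset U))
    (hK : IsSimplicialComplex K) (m : ℕ)
    (hdim_top : (faces K (m+1)).Nonempty)
    (hcof : ∀ σ ∈ faces K m, ∃ τ ∈ faces K (m+1), σ ⊆ τ)
    (ε : Finset U → ℝ)
    (hε1 : ∀ τ ∈ faces K (m+1), ε τ = 1 ∨ ε τ = -1)
    (hε2 : ∀ ρ ∈ faces K m, ∀ τ ∈ faces K (m+1), ∀ τ' ∈ faces K (m+1),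
      ρ ⊆ τ → ρ ⊆ τ' → ε τ * (sgnZ ρ τ : ℝ) = ε τ' * (sgnZ ρ τ' : ℝ)) :
    Module.End.HasEigenvalue (upLapMatrix K m).mulVecLin ((m : ℝ) + 2) := by
  classical
  -- the candidate eigenvector
  have hcof' : ∀ σ : {σ // σ ∈ faces K m}, ∃ τ, τ ∈ faces K (m+1) ∧ σ.1 ⊆ τ := by
    intro σ
    obtain ⟨τ, hτ, hsub⟩ := hcof σ.1 σ.2
    exact ⟨τ, hτ, hsub⟩
  set f : {σ // σ ∈ faces K m} → ℝ :=
    fun σ => ε (hcof' σ).choose * (sgnZ σ.1 (hcof' σ).choose : ℝ) with hf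
  have hwd : ∀ (σ : {σ // σ ∈ faces K m}) (τ : Finset U), τ ∈ faces K (m+1) → σ.1 ⊆ τ →
      f σ = ε τ * (sgnZ σ.1 τ : ℝ) := by
    intro σ τ hτ hsub
    obtain ⟨h1, h2⟩ := (hcof' σ).choose_spec
    exact hε2 σ.1 σ.2 _ h1 τ hτ h2 hsub
  have key : ∀ σ : {σ // σ ∈ faces K m},
      ∑ τ ∈ (faces K (m+1)).filter (σ.1 ⊆ ·), (sgnZ σ.1 τ : ℝ) * ε τ
        = (degS K σ.1 : ℝ) * f σ := by
    intro σ
    have hterm : ∀ τ ∈ (faces K (m+1)).filter (σ.1 ⊆ ·),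
        (sgnZ σ.1 τ : ℝ) * ε τ = f σ := by
      intro τ hτ
      obtain ⟨hτm, hsub⟩ := Finset.mem_filter.mp hτ
      rw [hwd σ τ hτm hsub, mul_comm]
    rw [Finset.sum_congr rfl hterm, Finset.sum_const, nsmul_eq_mul,
      degS_eq K m σ.1 ((mem_faces_iff K m σ.1).mp σ.2).2]
  -- the eigen equation
  have heig : ∀ σ : {σ // σ ∈ faces K m},
      ((upLapMatrix K m).mulVec f) σ = ((m : ℝ) + 2) * f σ := by
    intro σ
    have hd : (degS K σ.1 : ℝ) ≠ 0 := by
      have := degS_pos K m σ.1 σ.2 hcof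
      positivity
    rw [Matrix.mulVec, dotProduct]
    rw [← Finset.sum_erase_add _ _ (Finset.mem_univ σ)]
    have hdiag : upLapMatrix K m σ σ * f σ = f σ := by
      simp [upLapMatrix]
    rw [hdiag]
    have hoff : ∑ σ' ∈ Finset.univ.erase σ, upLapMatrix K m σ σ' * f σ'
        = ((m : ℝ) + 1) * f σ := by
      have step1 : ∀ σ' ∈ Finset.univ.erase σ,
          upLapMatrix K m σ σ' * f σ'
            = (degS K σ.1 : ℝ)⁻¹ *
              ∑ τ ∈ (faces K (m+1)).filter (fun τ => σ.1 ⊆ τ ∧ σ'.1 ⊆ τ),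
                (sgnZ σ.1 τ : ℝ) * ε τ := by
        intro σ' hσ'
        have hne : σ ≠ σ' := fun h => (Finset.mem_erase.mp hσ').1 h.symm
        rw [upLapMatrix, if_neg hne, cof_filter, mul_assoc, Finset.sum_mul]
        congr 1
        apply Finset.sum_congr rfl
        intro τ hτ
        obtain ⟨hτm, hsub, hsub'⟩ := Finset.mem_filter.mp hτ
        rw [hwd σ' τ hτm hsub']
        have hsq := sgnZ_sq_of_face K m σ'.1 τ σ'.2 hτm hsub'
        have hre : (sgnZ σ.1 τ : ℝ) * (sgnZ σ'.1 τ : ℝ) * (ε τ * (sgnZ σ'.1 τ : ℝ))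
            = (sgnZ σ.1 τ : ℝ) * ε τ * ((sgnZ σ'.1 τ : ℝ) * (sgnZ σ'.1 τ : ℝ)) := by ring
        rw [hre, hsq, mul_one]
      rw [Finset.sum_congr rfl step1, ← Finset.mul_sum]
      have swap : ∑ σ' ∈ Finset.univ.erase σ,
          ∑ τ ∈ (faces K (m+1)).filter (fun τ => σ.1 ⊆ τ ∧ σ'.1 ⊆ τ),
            (sgnZ σ.1 τ : ℝ) * ε τ
          = ((m : ℝ) + 1) * ∑ τ ∈ (faces K (m+1)).filter (σ.1 ⊆ ·),
              (sgnZ σ.1 τ : ℝ) * ε τ := by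
        simp_rw [Finset.sum_filter]
        rw [Finset.sum_comm, Finset.mul_sum]
        apply Finset.sum_congr rfl
        intro τ hτ
        by_cases hsub : σ.1 ⊆ τ
        · simp only [hsub, true_and, if_true]
          rw [← Finset.sum_filter, Finset.sum_const, nsmul_eq_mul]
          congr 1
          have hcard : ((Finset.univ.erase σ).filter
              (fun σ' : {σ // σ ∈ faces K m} => σ'.1 ⊆ τ)).card = m + 1 := by
            rw [Finset.filter_erase, Finset.card_erase_of_mem
              (Finset.mem_filter.mpr ⟨Finset.mem_univ σ, hsub⟩)]
            rw [Finset.univ_eq_attach, card_attach_filter (faces K m) (· ⊆ τ),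
              card_facets K hK m τ hτ]
            omega
          rw [hcard]
          push_cast
          ring
        · simp [hsub]
      rw [swap, key, mul_comm ((m:ℝ)+1), ← mul_assoc, ← mul_assoc,
        inv_mul_cancel₀ hd, one_mul, mul_comm]
    rw [hoff]; ring
  -- f ≠ 0
  have hfne : f ≠ 0 := by
    obtain ⟨τ, hτ⟩ := hdim_top
    have hτne : τ.Nonempty := by
      rw [← Finset.card_pos, ((mem_faces_iff K (m+1) τ).mp hτ).2]; omega
    set v := τ.min' hτne
    have hσm : τ.erase v ∈ faces K m := erase_mem_faces K hK m τ hτ v (τ.min'_mem hτne)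
    intro h0
    have h1 : f ⟨τ.erase v, hσm⟩ = 0 := by rw [h0]; rfl
    rw [hwd ⟨τ.erase v, hσm⟩ τ hτ (Finset.erase_subset _ _)] at h1
    have hsq := sgnZ_sq_of_face K m (τ.erase v) τ hσm hτ (Finset.erase_subset _ _)
    rcases hε1 τ hτ with h | h <;> rw [h] at h1 <;> nlinarith [hsq]
  exact Module.End.hasEigenvalue_of_hasEigenvector
    ⟨Module.End.mem_eigenspace_iff.mpr (by
        rw [Matrix.mulVecLin_apply]
        funext σ
        rw [Pi.smul_apply, smul_eq_mul]
        exact heig σ), hfne⟩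

lemma backward_dir (K : Finset (Finset U))
    (hK : IsSimplicialComplex K) (m : ℕ)
    (hcof : ∀ σ ∈ faces K m, ∃ τ ∈ faces K (m+1), σ ⊆ τ)
    (hconn : ∀ σ ∈ faces K m, ∀ σ' ∈ faces K m,
      Relation.ReflTransGen
        (fun a b => a ∈ faces K m ∧ b ∈ faces K m ∧ a ≠ b ∧
          ∃ τ ∈ faces K (m+1), a ⊆ τ ∧ b ⊆ τ) σ σ')
    (heig : Module.End.HasEigenvalue (upLapMatrix K m).mulVecLin ((m : ℝ) + 2)) :
    ∃ ε : Finset U → ℝ, (∀ τ ∈ faces K (m+1), ε τ = 1 ∨ ε τ = -1) ∧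
      ∀ ρ ∈ faces K m, ∀ τ ∈ faces K (m+1), ∀ τ' ∈ faces K (m+1),
        ρ ⊆ τ → ρ ⊆ τ' → ε τ * (sgnZ ρ τ : ℝ) = ε τ' * (sgnZ ρ τ' : ℝ) := by
  classical
  obtain ⟨f, hmem, hfne⟩ := heig.exists_hasEigenvector
  have hev : ∀ σ : {σ // σ ∈ faces K m},
      ∑ σ' : {σ // σ ∈ faces K m}, upLapMatrix K m σ σ' * f σ' = ((m : ℝ) + 2) * f σ := by
    intro σ
    have := congrFun (Module.End.mem_eigenspace_iff.mp hmem) σ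
    rw [Matrix.mulVecLin_apply] at this
    simpa [Matrix.mulVec, dotProduct] using this
  set T := faces K (m+1) with hT
  -- pointwise rearranged eigen equation
  have hpt : ∀ σ : {σ // σ ∈ faces K m},
      ∑ σ' ∈ Finset.univ.erase σ,
        ∑ τ ∈ T, (if σ.1 ⊆ τ ∧ σ'.1 ⊆ τ then
          (sgnZ σ.1 τ : ℝ) * (sgnZ σ'.1 τ : ℝ) * f σ * f σ' else 0)
        = ((m : ℝ) + 1) * (degS K σ.1 : ℝ) * (f σ * f σ) := by
    intro σ
    have hd : (degS K σ.1 : ℝ) ≠ 0 := by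
      have := degS_pos K m σ.1 σ.2 hcof; positivity
    have h1 := hev σ
    rw [← Finset.sum_erase_add _ _ (Finset.mem_univ σ)] at h1
    have hdiag : upLapMatrix K m σ σ * f σ = f σ := by simp [upLapMatrix]
    rw [hdiag] at h1
    -- rewrite each off-diagonal term
    have h2 : ∀ σ' ∈ Finset.univ.erase σ,
        upLapMatrix K m σ σ' * f σ'
          = (degS K σ.1 : ℝ)⁻¹ * ∑ τ ∈ T, (if σ.1 ⊆ τ ∧ σ'.1 ⊆ τ then
              (sgnZ σ.1 τ : ℝ) * (sgnZ σ'.1 τ : ℝ) * f σ' else 0) := by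
      intro σ' hσ'
      have hne : σ ≠ σ' := fun h => (Finset.mem_erase.mp hσ').1 h.symm
      rw [upLapMatrix, if_neg hne, cof_filter, mul_assoc, Finset.sum_mul,
        Finset.sum_filter]
    rw [Finset.sum_congr rfl h2, ← Finset.mul_sum] at h1
    have h3 : ∑ σ' ∈ Finset.univ.erase σ,
        ∑ τ ∈ T, (if σ.1 ⊆ τ ∧ σ'.1 ⊆ τ then
          (sgnZ σ.1 τ : ℝ) * (sgnZ σ'.1 τ : ℝ) * f σ' else 0)
        = ((m : ℝ) + 1) * (degS K σ.1 : ℝ) * f σ := by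
      have := h1
      field_simp at this ⊢
      linarith [this]
    calc ∑ σ' ∈ Finset.univ.erase σ,
        ∑ τ ∈ T, (if σ.1 ⊆ τ ∧ σ'.1 ⊆ τ then
          (sgnZ σ.1 τ : ℝ) * (sgnZ σ'.1 τ : ℝ) * f σ * f σ' else 0)
        = (∑ σ' ∈ Finset.univ.erase σ,
        ∑ τ ∈ T, (if σ.1 ⊆ τ ∧ σ'.1 ⊆ τ then
          (sgnZ σ.1 τ : ℝ) * (sgnZ σ'.1 τ : ℝ) * f σ' else 0)) * f σ := by
          rw [Finset.sum_mul]
          apply Finset.sum_congr rfl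
          intro σ' _
          rw [Finset.sum_mul]
          apply Finset.sum_congr rfl
          intro τ _
          split_ifs <;> ring
      _ = ((m : ℝ) + 1) * (degS K σ.1 : ℝ) * (f σ * f σ) := by rw [h3]; ring
  -- notation
  set W : ℝ := ∑ σ : {σ // σ ∈ faces K m}, (degS K σ.1 : ℝ) * (f σ * f σ) with hW
  -- count of facets
  have hcount : ∀ τ ∈ T, ∑ σ : {σ // σ ∈ faces K m},
      (if σ.1 ⊆ τ then (1:ℝ) else 0) = (m : ℝ) + 2 := by
    intro τ hτ
    rw [Finset.sum_boole, Finset.univ_eq_attach, card_attach_filter (faces K m) (· ⊆ τ),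
      card_facets K hK m τ hτ]
    push_cast; ring
  -- diagonal weight
  have hDW : ∑ τ ∈ T, ∑ σ : {σ // σ ∈ faces K m},
      (if σ.1 ⊆ τ then f σ * f σ else 0) = W := by
    rw [Finset.sum_comm, hW]
    apply Finset.sum_congr rfl
    intro σ _
    rw [← Finset.sum_filter, Finset.sum_const, nsmul_eq_mul,
      degS_eq K m σ.1 ((mem_faces_iff K m σ.1).mp σ.2).2]
  have hxsq : ∀ τ ∈ T, ∀ σ : {σ // σ ∈ faces K m}, σ.1 ⊆ τ →
      ((sgnZ σ.1 τ : ℝ) * f σ) * ((sgnZ σ.1 τ : ℝ) * f σ) = f σ * f σ := by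
    intro τ hτ σ hsub
    have := sgnZ_sq_of_face K m σ.1 τ σ.2 hτ hsub
    nlinarith [this]
  -- A' = (m+1) W
  have hA : ∑ τ ∈ T, ∑ σ : {σ // σ ∈ faces K m}, ∑ σ' ∈ Finset.univ.erase σ,
      (if σ.1 ⊆ τ ∧ σ'.1 ⊆ τ then
        (sgnZ σ.1 τ : ℝ) * (sgnZ σ'.1 τ : ℝ) * f σ * f σ' else 0)
      = ((m : ℝ) + 1) * W := by
    rw [Finset.sum_comm]
    calc ∑ σ : {σ // σ ∈ faces K m}, ∑ τ ∈ T, ∑ σ' ∈ Finset.univ.erase σ,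
        (if σ.1 ⊆ τ ∧ σ'.1 ⊆ τ then
          (sgnZ σ.1 τ : ℝ) * (sgnZ σ'.1 τ : ℝ) * f σ * f σ' else 0)
        = ∑ σ : {σ // σ ∈ faces K m}, ∑ σ' ∈ Finset.univ.erase σ, ∑ τ ∈ T,
          (if σ.1 ⊆ τ ∧ σ'.1 ⊆ τ then
            (sgnZ σ.1 τ : ℝ) * (sgnZ σ'.1 τ : ℝ) * f σ * f σ' else 0) := by
          exact Finset.sum_congr rfl fun σ _ => Finset.sum_comm
      _ = ∑ σ : {σ // σ ∈ faces K m}, ((m : ℝ) + 1) * (degS K σ.1 : ℝ) * (f σ * f σ) :=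
          Finset.sum_congr rfl fun σ _ => hpt σ
      _ = ((m : ℝ) + 1) * W := by
          rw [hW, Finset.mul_sum]
          exact Finset.sum_congr rfl (fun σ _ => by ring)
  -- expansion of the square
  have hB : ∀ τ ∈ T,
      (∑ σ : {σ // σ ∈ faces K m}, if σ.1 ⊆ τ then (sgnZ σ.1 τ : ℝ) * f σ else 0)
        * (∑ σ : {σ // σ ∈ faces K m}, if σ.1 ⊆ τ then (sgnZ σ.1 τ : ℝ) * f σ else 0)
      = (∑ σ : {σ // σ ∈ faces K m}, if σ.1 ⊆ τ then f σ * f σ else 0)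
        + ∑ σ : {σ // σ ∈ faces K m}, ∑ σ' ∈ Finset.univ.erase σ,
          (if σ.1 ⊆ τ ∧ σ'.1 ⊆ τ then
            (sgnZ σ.1 τ : ℝ) * (sgnZ σ'.1 τ : ℝ) * f σ * f σ' else 0) := by
    intro τ hτ
    rw [Finset.sum_mul_sum]
    have hper : ∀ σ : {σ // σ ∈ faces K m},
        ∑ σ' : {σ // σ ∈ faces K m},
          (if σ.1 ⊆ τ then (sgnZ σ.1 τ : ℝ) * f σ else 0)
            * (if σ'.1 ⊆ τ then (sgnZ σ'.1 τ : ℝ) * f σ' else 0)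
        = (if σ.1 ⊆ τ then f σ * f σ else 0)
          + ∑ σ' ∈ Finset.univ.erase σ,
            (if σ.1 ⊆ τ ∧ σ'.1 ⊆ τ then
              (sgnZ σ.1 τ : ℝ) * (sgnZ σ'.1 τ : ℝ) * f σ * f σ' else 0) := by
      intro σ
      rw [← Finset.sum_erase_add _ _ (Finset.mem_univ σ)]
      have hdg : (if σ.1 ⊆ τ then (sgnZ σ.1 τ : ℝ) * f σ else 0)
          * (if σ.1 ⊆ τ then (sgnZ σ.1 τ : ℝ) * f σ else 0)
          = (if σ.1 ⊆ τ then f σ * f σ else 0) := by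
        by_cases h : σ.1 ⊆ τ
        · simp only [h, if_true]; exact hxsq τ hτ σ h
        · simp [h]
      rw [hdg, add_comm]
      congr 1
      apply Finset.sum_congr rfl
      intro σ' _
      by_cases h1 : σ.1 ⊆ τ <;> by_cases h2 : σ'.1 ⊆ τ <;> simp [h1, h2] <;> ring
    rw [Finset.sum_congr rfl fun σ _ => hper σ, Finset.sum_add_distrib]
  -- the Cauchy-Schwarz defect per simplex
  have hC : ∀ τ ∈ T,
      ∑ σ : {σ // σ ∈ faces K m}, ∑ σ' : {σ // σ ∈ faces K m},
        (if σ.1 ⊆ τ ∧ σ'.1 ⊆ τ then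
          ((sgnZ σ.1 τ : ℝ) * f σ - (sgnZ σ'.1 τ : ℝ) * f σ')
            * ((sgnZ σ.1 τ : ℝ) * f σ - (sgnZ σ'.1 τ : ℝ) * f σ') else 0)
      = 2 * ((m : ℝ) + 2) * (∑ σ : {σ // σ ∈ faces K m}, if σ.1 ⊆ τ then f σ * f σ else 0)
        - 2 * ((∑ σ : {σ // σ ∈ faces K m}, if σ.1 ⊆ τ then (sgnZ σ.1 τ : ℝ) * f σ else 0)
          * (∑ σ : {σ // σ ∈ faces K m}, if σ.1 ⊆ τ then (sgnZ σ.1 τ : ℝ) * f σ else 0)) := by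
    intro τ hτ
    have hper : ∀ σ σ' : {σ // σ ∈ faces K m},
        (if σ.1 ⊆ τ ∧ σ'.1 ⊆ τ then
          ((sgnZ σ.1 τ : ℝ) * f σ - (sgnZ σ'.1 τ : ℝ) * f σ')
            * ((sgnZ σ.1 τ : ℝ) * f σ - (sgnZ σ'.1 τ : ℝ) * f σ') else 0)
        = (if σ.1 ⊆ τ then f σ * f σ else 0) * (if σ'.1 ⊆ τ then (1:ℝ) else 0)
          + (if σ.1 ⊆ τ then (1:ℝ) else 0) * (if σ'.1 ⊆ τ then f σ' * f σ' else 0)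
          - 2 * ((if σ.1 ⊆ τ then (sgnZ σ.1 τ : ℝ) * f σ else 0)
            * (if σ'.1 ⊆ τ then (sgnZ σ'.1 τ : ℝ) * f σ' else 0)) := by
      intro σ σ'
      by_cases h1 : σ.1 ⊆ τ <;> by_cases h2 : σ'.1 ⊆ τ <;>
        simp only [h1, h2, true_and, false_and, and_true, and_false, if_true, if_false]
        <;> [skip; ring; ring; ring]
      have e1 := hxsq τ hτ σ h1
      have e2 := hxsq τ hτ σ' h2
      nlinarith [e1, e2]
    simp only [hper]
    rw [Finset.sum_congr rfl (fun σ _ => Finset.sum_sub_distrib _ _),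
      Finset.sum_sub_distrib,
      Finset.sum_congr rfl (fun σ _ => Finset.sum_add_distrib),
      Finset.sum_add_distrib]
    simp only [← Finset.mul_sum, ← Finset.sum_mul]
    rw [hcount τ hτ]
    ring
  -- total defect is zero, hence all terms vanish
  have hCtot : ∑ τ ∈ T,
      (∑ σ : {σ // σ ∈ faces K m}, ∑ σ' : {σ // σ ∈ faces K m},
        (if σ.1 ⊆ τ ∧ σ'.1 ⊆ τ then
          ((sgnZ σ.1 τ : ℝ) * f σ - (sgnZ σ'.1 τ : ℝ) * f σ')
            * ((sgnZ σ.1 τ : ℝ) * f σ - (sgnZ σ'.1 τ : ℝ) * f σ') else 0)) = 0 := by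
    rw [Finset.sum_congr rfl hC, Finset.sum_sub_distrib]
    have e1 : ∑ τ ∈ T, 2 * ((m : ℝ) + 2) *
        (∑ σ : {σ // σ ∈ faces K m}, if σ.1 ⊆ τ then f σ * f σ else 0)
        = 2 * ((m : ℝ) + 2) * W := by
      rw [← Finset.mul_sum, hDW]
    have e2 : ∑ τ ∈ T, 2 *
        ((∑ σ : {σ // σ ∈ faces K m}, if σ.1 ⊆ τ then (sgnZ σ.1 τ : ℝ) * f σ else 0)
          * (∑ σ : {σ // σ ∈ faces K m}, if σ.1 ⊆ τ then (sgnZ σ.1 τ : ℝ) * f σ else 0))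
        = 2 * ((m : ℝ) + 2) * W := by
      rw [← Finset.mul_sum, Finset.sum_congr rfl hB, Finset.sum_add_distrib, hDW, hA]
      ring
    rw [e1, e2]
    ring
  -- all Cauchy–Schwarz defects vanish
  have hP : ∀ τ ∈ T, ∀ σ σ' : {σ // σ ∈ faces K m}, σ.1 ⊆ τ → σ'.1 ⊆ τ →
      (sgnZ σ.1 τ : ℝ) * f σ = (sgnZ σ'.1 τ : ℝ) * f σ' := by
    intro τ hτ σ σ' h1 h2
    have nn2 : ∀ (τ : Finset U) (σ σ' : {σ // σ ∈ faces K m}),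
        (0:ℝ) ≤ (if σ.1 ⊆ τ ∧ σ'.1 ⊆ τ then
          ((sgnZ σ.1 τ : ℝ) * f σ - (sgnZ σ'.1 τ : ℝ) * f σ')
            * ((sgnZ σ.1 τ : ℝ) * f σ - (sgnZ σ'.1 τ : ℝ) * f σ') else 0) := by
      intro τ σ σ'
      split_ifs
      · exact mul_self_nonneg _
      · exact le_refl 0
    have hτ0 := (Finset.sum_eq_zero_iff_of_nonneg (fun τ _ =>
      Finset.sum_nonneg fun σ _ => Finset.sum_nonneg fun σ' _ => nn2 τ σ σ')).mp
        hCtot τ hτ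
    have hσ0 := (Finset.sum_eq_zero_iff_of_nonneg (fun σ _ =>
      Finset.sum_nonneg fun σ' _ => nn2 τ σ σ')).mp hτ0 σ (Finset.mem_univ σ)
    have hterm := (Finset.sum_eq_zero_iff_of_nonneg (fun σ' _ =>
      nn2 τ σ σ')).mp hσ0 σ' (Finset.mem_univ σ')
    rw [if_pos ⟨h1, h2⟩] at hterm
    have := mul_self_eq_zero.mp hterm
    linarith [this]
  -- squares of f are constant along the dual graph
  set g : Finset U → ℝ := fun ρ => if h : ρ ∈ faces K m then f ⟨ρ, h⟩ else 0 with hg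
  have hgval : ∀ (ρ : Finset U) (h : ρ ∈ faces K m), g ρ = f ⟨ρ, h⟩ := by
    intro ρ h
    rw [hg]
    exact dif_pos h
  have hstep : ∀ a b : Finset U,
      (a ∈ faces K m ∧ b ∈ faces K m ∧ a ≠ b ∧ ∃ τ ∈ T, a ⊆ τ ∧ b ⊆ τ) →
      g a * g a = g b * g b := by
    rintro a b ⟨ha, hb, -, τ, hτ, hsa, hsb⟩
    rw [hgval a ha, hgval b hb]
    have heq := hP τ hτ ⟨a, ha⟩ ⟨b, hb⟩ hsa hsb
    have e1 := sgnZ_sq_of_face K m a τ ha hτ hsa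
    have e2 := sgnZ_sq_of_face K m b τ hb hτ hsb
    calc f ⟨a, ha⟩ * f ⟨a, ha⟩
        = ((sgnZ a τ : ℝ) * (sgnZ a τ : ℝ)) * (f ⟨a, ha⟩ * f ⟨a, ha⟩) := by rw [e1]; ring
      _ = ((sgnZ a τ : ℝ) * f ⟨a, ha⟩) * ((sgnZ a τ : ℝ) * f ⟨a, ha⟩) := by ring
      _ = ((sgnZ b τ : ℝ) * f ⟨b, hb⟩) * ((sgnZ b τ : ℝ) * f ⟨b, hb⟩) := by rw [heq]
      _ = ((sgnZ b τ : ℝ) * (sgnZ b τ : ℝ)) * (f ⟨b, hb⟩ * f ⟨b, hb⟩) := by ring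
      _ = f ⟨b, hb⟩ * f ⟨b, hb⟩ := by rw [e2]; ring
  obtain ⟨σ₀, hσ₀⟩ := Function.ne_iff.mp hfne
  have hσ₀ : f σ₀ ≠ 0 := hσ₀
  have hconst : ∀ σ : {σ // σ ∈ faces K m}, f σ * f σ = f σ₀ * f σ₀ := by
    intro σ
    have gen : ∀ a b : Finset U, Relation.ReflTransGen
        (fun a b => a ∈ faces K m ∧ b ∈ faces K m ∧ a ≠ b ∧ ∃ τ ∈ T, a ⊆ τ ∧ b ⊆ τ) a b →
        g a * g a = g b * g b := by
      intro a b h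
      induction h with
      | refl => rfl
      | tail _ hbc ih => exact ih.trans (hstep _ _ hbc)
    have hgs := gen σ.1 σ₀.1 (hconn σ.1 σ.2 σ₀.1 σ₀.2)
    rwa [hgval σ.1 σ.2, hgval σ₀.1 σ₀.2, Subtype.coe_eta, Subtype.coe_eta] at hgs
  -- build the disorientation
  have hnemp : ∀ τ ∈ T, τ.Nonempty := by
    intro τ h
    apply Finset.card_pos.mp
    rw [((mem_faces_iff K (m+1) τ).mp h).2]
    omega
  set ε : Finset U → ℝ := fun τ =>
    if h : τ ∈ T then
      (sgnZ (τ.erase (τ.min' (hnemp τ h))) τ : ℝ) * g (τ.erase (τ.min' (hnemp τ h))) / f σ₀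
    else 1 with hε
  have hkey : ∀ τ (hτ : τ ∈ T) (ρ : Finset U) (hρ : ρ ∈ faces K m), ρ ⊆ τ →
      ε τ * (sgnZ ρ τ : ℝ) = f ⟨ρ, hρ⟩ / f σ₀ := by
    intro τ hτ ρ hρ hsub
    rw [hε]
    simp only [dif_pos hτ]
    have hρ₀ : τ.erase (τ.min' (hnemp τ hτ)) ∈ faces K m :=
      erase_mem_faces K hK m τ hτ _ (τ.min'_mem _)
    have hsub₀ : τ.erase (τ.min' (hnemp τ hτ)) ⊆ τ := Finset.erase_subset _ _
    rw [hgval _ hρ₀]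
    have heq := hP τ hτ ⟨_, hρ₀⟩ ⟨ρ, hρ⟩ hsub₀ hsub
    have e1 := sgnZ_sq_of_face K m ρ τ hρ hτ hsub
    rw [div_mul_eq_mul_div, heq]
    congr 1
    linear_combination f ⟨ρ, hρ⟩ * e1
  refine ⟨ε, ?_, ?_⟩
  · intro τ hτ
    apply mul_self_eq_one_iff.mp
    have hρ₀ : τ.erase (τ.min' (hnemp τ hτ)) ∈ faces K m :=
      erase_mem_faces K hK m τ hτ _ (τ.min'_mem _)
    have hsub₀ : τ.erase (τ.min' (hnemp τ hτ)) ⊆ τ := Finset.erase_subset _ _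
    have hk := hkey τ hτ _ hρ₀ hsub₀
    have e1 := sgnZ_sq_of_face K m _ τ hρ₀ hτ hsub₀
    have e2 := hconst ⟨_, hρ₀⟩
    have h1 : (ε τ * (sgnZ (τ.erase (τ.min' (hnemp τ hτ))) τ : ℝ))
        * (ε τ * (sgnZ (τ.erase (τ.min' (hnemp τ hτ))) τ : ℝ))
        = (f ⟨_, hρ₀⟩ / f σ₀) * (f ⟨_, hρ₀⟩ / f σ₀) := by rw [hk]
    have h2 : (f ⟨_, hρ₀⟩ / f σ₀) * (f ⟨_, hρ₀⟩ / f σ₀) = 1 := by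
      rw [div_mul_div_comm, e2, div_self (by positivity)]
    calc ε τ * ε τ
        = (ε τ * (sgnZ (τ.erase (τ.min' (hnemp τ hτ))) τ : ℝ))
          * (ε τ * (sgnZ (τ.erase (τ.min' (hnemp τ hτ))) τ : ℝ)) := by
          linear_combination (-(ε τ * ε τ)) * e1
      _ = 1 := by rw [h1, h2]
  · intro ρ hρ τ hτ τ' hτ' hsub hsub'
    rw [hkey τ hτ ρ hρ hsub, hkey τ' hτ' ρ hρ hsub']


end aux

/-- A finite `n`-dimensional simplicial complex (every `(n−1)`-simplex being a facet of some
`n`-simplex, with connected dual graph on `Σ_{n−1}`) is disorientable iff its normalized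
up-Laplacian `Δ_{n−1}^up` attains the maximal possible eigenvalue `n+1`. -/


theorem stmt16 {U : Type*} [LinearOrder U] (K : Finset (Finset U))
    (hK : IsSimplicialComplex K) (n : ℕ) (hn : 1 ≤ n)
    (hdim_top : (faces K n).Nonempty)
    (hdim : ∀ σ ∈ K, σ.card ≤ n + 1)
    (hcof : ∀ σ ∈ faces K (n - 1), ∃ τ ∈ faces K n, σ ⊆ τ)
    (hconn : ∀ σ ∈ faces K (n - 1), ∀ σ' ∈ faces K (n - 1),
      Relation.ReflTransGen
        (fun a b => a ∈ faces K (n - 1) ∧ b ∈ faces K (n - 1) ∧ a ≠ b ∧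
          ∃ τ ∈ faces K n, a ⊆ τ ∧ b ⊆ τ) σ σ') :
    Disorientable K n ↔
      Module.End.HasEigenvalue (upLapMatrix K (n - 1)).mulVecLin ((n : ℝ) + 1)     := by
  obtain ⟨m, rfl⟩ : ∃ m, n = m + 1 := ⟨n - 1, by omega⟩
  simp only [Nat.add_sub_cancel] at hcof hconn ⊢
  have hcast : ((m + 1 : ℕ) : ℝ) + 1 = (m : ℝ) + 2 := by push_cast; ring
  rw [hcast]
  constructor
  · rintro ⟨ε, hε1, hε2⟩
    simp only [Nat.add_sub_cancel] at hε2
    exact forward_dir K hK m hdim_top hcof ε hε1 hε2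
  · intro h
    obtain ⟨ε, h1, h2⟩ := backward_dir K hK m hcof hconn h
    refine ⟨ε, h1, ?_⟩
    simpa only [Nat.add_sub_cancel] using h2
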